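/- Let Φ₁ and Φ₂ be linear maps on d×d complex matrices such that ‖Φᵢ(X)‖₁ ≤ ‖X‖₁ for every matrix X (i = 1,2), each of which maps density matrices to density matrices, and suppose ρ₁ and ρ₂ are density matrices with Φ₁(ρ₁) = ρ₁ and Φ₂(ρ₂) = ρ₂. Fix ε > 0 and a natural number m such that ‖Φ₁^m(ρ) − ρ₁‖₁ ≤ ε/2 for every density matrix ρ, and such that m·‖Φ₁ − Φ₂‖_{1→1} ≤ ε/2. Then for every density matrix ρ one has ‖Φ₂^m(ρ) − ρ₂‖₁ ≤ 2ε. -/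

import Mathlib

open Matrix MeasureTheory Filter
open scoped ComplexOrder

noncomputable section

/-- The space of `d × d` complex matrices. -/
abbrev Mat (d : ℕ) : Type := Matrix (Fin d) (Fin d) ℂ

/-- The Gibbs state `ρ_β = exp(-βH)/Tr(exp(-βH))`. -/
def gibbs {d : ℕ} (H : Mat d) (β : ℝ) : Mat d :=
  (Matrix.trace (NormedSpace.exp ((-β : ℂ) • H)))⁻¹ • NormedSpace.exp ((-β : ℂ) • H)

/-- The power `ρ_β^s = exp(-sβH)/Tr(exp(-βH))^s`. -/
def gibbsPow {d : ℕ} (H : Mat d) (β s : ℝ) : Mat d :=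
  ((Matrix.trace (NormedSpace.exp ((-β : ℂ) • H))) ^ (s : ℂ))⁻¹ •
    NormedSpace.exp ((-(s * β) : ℂ) • H)

/-- The Hilbert–Schmidt inner product `⟨A,B⟩₂ = Tr(A† B)`. -/
def hsInner {d : ℕ} (A B : Mat d) : ℂ := Matrix.trace (Aᴴ * B)

/-- The KMS inner product `⟨A,B⟩_{ρ_β} = Tr(A† ρ_β^{1/2} B ρ_β^{1/2})`. -/
def kmsInner {d : ℕ} (H : Mat d) (β : ℝ) (A B : Mat d) : ℂ :=
  Matrix.trace (Aᴴ * gibbsPow H β (1/2) * B * gibbsPow H β (1/2))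

/-- The trace norm `‖A‖₁ = Tr √(A†A)`. -/
def traceNorm {d : ℕ} (A : Mat d) : ℝ :=
  (((Matrix.posSemidef_conjTranspose_mul_self A).1.eigenvectorUnitary.1 *
    diagonal (((↑) : ℝ → ℂ) ∘ Real.sqrt ∘ (Matrix.posSemidef_conjTranspose_mul_self A).1.eigenvalues) *
    (star (Matrix.posSemidef_conjTranspose_mul_self A).1.eigenvectorUnitary : Mat d)).trace).re

/-- The operator (spectral) norm of a matrix. -/
def opNorm {d : ℕ} (A : Mat d) : ℝ :=
  ‖Matrix.toEuclideanCLM (𝕜 := ℂ) A‖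

/-- The Frobenius / Hilbert–Schmidt norm `‖A‖₂ = √Tr(A†A)`. -/
def frobNorm {d : ℕ} (A : Mat d) : ℝ :=
  Real.sqrt ((Matrix.trace (Aᴴ * A)).re)

attribute [local instance] Matrix.frobeniusNormedAddCommGroup Matrix.frobeniusNormedSpace

/-- The exponential of a linear endomorphism of matrix space. -/
def endExp {d : ℕ} (L : Mat d →ₗ[ℂ] Mat d) : Mat d →ₗ[ℂ] Mat d :=
  (@NormedSpace.exp _ _ _
    (@NonUnitalSeminormedRing.toIsTopologicalRing _
      (@NormedRing.toSeminormedRing _ ContinuousLinearMap.toNormedRing).toNonUnitalSeminormedRing)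
    (LinearMap.toContinuousLinearMap L)).toLinearMap

/-- The induced trace norm (1→1 norm) of a linear map on matrices. -/
def oneNorm {d : ℕ} (L : Mat d →ₗ[ℂ] Mat d) : ℝ :=
  ⨆ A : {A : Mat d // traceNorm A = 1}, traceNorm (L A.1)


namespace TN

/-- The positive square root of a positive semidefinite matrix. -/
def psqrt {M : Mat d} (hM : M.PosSemidef) : Mat d :=
  hM.1.eigenvectorUnitary.1 * diagonal (((↑) : ℝ → ℂ) ∘ Real.sqrt ∘ hM.1.eigenvalues) *
    (star hM.1.eigenvectorUnitary : Mat d)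

lemma traceNorm_eq (A : Mat d) :
    traceNorm A = (psqrt (Matrix.posSemidef_conjTranspose_mul_self A)).trace.re := rfl

section
open scoped MatrixOrder

lemma psqrt_eq_cfc {M : Mat d} (hM : M.PosSemidef) : psqrt hM = CFC.sqrt M := by
  rw [CFC.sqrt_eq_cfc, cfc_nnreal_eq_real _ M, hM.1.cfc_eq]
  simp only [IsHermitian.cfc, psqrt, Real.coe_sqrt, Real.coe_toNNReal', Unitary.conjStarAlgAut_apply]
  congr 3
  funext i
  simp [hM.eigenvalues_nonneg i]

lemma psqrt_psd {M : Mat d} (hM : M.PosSemidef) : (psqrt hM).PosSemidef := by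
  rw [psqrt_eq_cfc]; exact (CFC.sqrt_nonneg M).posSemidef

lemma psqrt_mul_self {M : Mat d} (hM : M.PosSemidef) : psqrt hM * psqrt hM = M := by
  rw [psqrt_eq_cfc]; exact CFC.sqrt_mul_sqrt_self M hM.nonneg

lemma eq_psqrt_of_sq_eq {M N : Mat d} (hN : N.PosSemidef) (hM : M.PosSemidef)
    (h : N ^ 2 = M) : N = psqrt hM := by
  rw [psqrt_eq_cfc]; exact (CFC.sqrt_unique (by rw [← pow_two]; exact h) hN.nonneg).symm

end

lemma psd_trace_re_nonneg {M : Mat d} (hM : M.PosSemidef) : 0 ≤ M.trace.re := by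
  have h : ∀ i, 0 ≤ (M i i).re := by
    intro i
    have := hM.dotProduct_mulVec_nonneg (Pi.single i 1)
    have hd : dotProduct (star (Pi.single i 1)) (M *ᵥ Pi.single i 1) = M i i := by
      simp [Matrix.mulVec_single, dotProduct, Pi.single_apply]
    rw [hd] at this
    exact (Complex.le_def.mp this).1
  simpa [Matrix.trace, Matrix.diag, Complex.re_sum] using Finset.sum_nonneg fun i _ => h i

lemma traceNorm_nonneg (A : Mat d) : 0 ≤ traceNorm A :=
  psd_trace_re_nonneg (psqrt_psd (Matrix.posSemidef_conjTranspose_mul_self A))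

lemma traceNorm_psd {M : Mat d} (hM : M.PosSemidef) : traceNorm M = M.trace.re := by
  have h : M = psqrt (Matrix.posSemidef_conjTranspose_mul_self M) := by
    refine eq_psqrt_of_sq_eq hM _ ?_
    rw [pow_two, hM.1.eq]
  rw [traceNorm_eq]
  rw [← h]

lemma traceNorm_congr {A B : Mat d} (h : Aᴴ * A = Bᴴ * B) : traceNorm A = traceNorm B := by
  have h2 : psqrt (Matrix.posSemidef_conjTranspose_mul_self A)
      = psqrt (Matrix.posSemidef_conjTranspose_mul_self B) := by
    refine eq_psqrt_of_sq_eq (psqrt_psd (Matrix.posSemidef_conjTranspose_mul_self A)) _ ?_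
    rw [pow_two, psqrt_mul_self (Matrix.posSemidef_conjTranspose_mul_self A), h]
  rw [traceNorm_eq, traceNorm_eq]
  rw [h2]

lemma traceNorm_neg (A : Mat d) : traceNorm (-A) = traceNorm A :=
  traceNorm_congr (by simp)

lemma traceNorm_sub_comm (A B : Mat d) : traceNorm (A - B) = traceNorm (B - A) := by
  rw [← traceNorm_neg (A - B), neg_sub]

lemma traceNorm_zero : traceNorm (0 : Mat d) = 0 := by
  rw [traceNorm_psd Matrix.PosSemidef.zero]; simp

/-- Hilbert–Schmidt Cauchy–Schwarz. -/
lemma cs (X Y : Mat d) : ‖Matrix.trace (Xᴴ * Y)‖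
    ≤ Real.sqrt ((Matrix.trace (Xᴴ * X)).re) * Real.sqrt ((Matrix.trace (Yᴴ * Y)).re) := by
  classical
  set x : EuclideanSpace ℂ (Fin d × Fin d) := WithLp.toLp 2 (fun p : Fin d × Fin d => X p.1 p.2)
  set y : EuclideanSpace ℂ (Fin d × Fin d) := WithLp.toLp 2 (fun p : Fin d × Fin d => Y p.1 p.2)
  have hin : (inner ℂ x y : ℂ) = Matrix.trace (Xᴴ * Y) := by
    simp only [PiLp.inner_apply, RCLike.inner_apply, Matrix.trace, Matrix.diag,
      Matrix.mul_apply, Matrix.conjTranspose_apply]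
    rw [← Finset.sum_product']
    simp only [x, y, Finset.univ_product_univ, mul_comm]
    exact Fintype.sum_equiv (Equiv.prodComm _ _) _ _ (fun p => rfl)
  have hxx : (inner ℂ x x : ℂ) = Matrix.trace (Xᴴ * X) := by
    simp only [PiLp.inner_apply, RCLike.inner_apply, Matrix.trace, Matrix.diag,
      Matrix.mul_apply, Matrix.conjTranspose_apply]
    rw [← Finset.sum_product']
    simp only [Finset.univ_product_univ, mul_comm]
    exact Fintype.sum_equiv (Equiv.prodComm _ _) _ _ (fun p => rfl)
  have hyy : (inner ℂ y y : ℂ) = Matrix.trace (Yᴴ * Y) := by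
    simp only [PiLp.inner_apply, RCLike.inner_apply, Matrix.trace, Matrix.diag,
      Matrix.mul_apply, Matrix.conjTranspose_apply]
    rw [← Finset.sum_product']
    simp only [Finset.univ_product_univ, mul_comm]
    exact Fintype.sum_equiv (Equiv.prodComm _ _) _ _ (fun p => rfl)
  have h1 : (Matrix.trace (Xᴴ * X)).re = ‖x‖ ^ 2 := by
    rw [← hxx]; exact inner_self_eq_norm_sq (𝕜 := ℂ) x
  have h2 : (Matrix.trace (Yᴴ * Y)).re = ‖y‖ ^ 2 := by
    rw [← hyy]; exact inner_self_eq_norm_sq (𝕜 := ℂ) y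
  rw [h1, h2, Real.sqrt_sq (norm_nonneg x), Real.sqrt_sq (norm_nonneg y), ← hin]
  exact norm_inner_le_norm (𝕜 := ℂ) x y

lemma aux (A : Mat d) : ∃ R W : Mat d,
    Rᴴ = R ∧
    R * R = psqrt (Matrix.posSemidef_conjTranspose_mul_self A) ∧
    W * (R * R) = A ∧
    (1 - Wᴴ * W).PosSemidef ∧
    Wᴴ * W * (R * R) = R * R := by
  classical
  set M := Aᴴ * A with hMdef
  have hM : M.PosSemidef := Matrix.posSemidef_conjTranspose_mul_self A
  set S := psqrt hM with hSdef
  have hS : S.PosSemidef := psqrt_psd hM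
  have hH : S.IsHermitian := hS.1
  set σ : Fin d → ℝ := hH.eigenvalues with hσdef
  have hσ : ∀ i, 0 ≤ σ i := fun i => hS.eigenvalues_nonneg i
  set V : Mat d := (hH.eigenvectorUnitary : Mat d) with hVdef
  have hV1 : Vᴴ * V = 1 := by
    rw [← Matrix.star_eq_conjTranspose]
    exact Matrix.mem_unitaryGroup_iff'.mp hH.eigenvectorUnitary.2
  have hV2 : V * Vᴴ = 1 := by
    rw [← Matrix.star_eq_conjTranspose]
    exact Matrix.mem_unitaryGroup_iff.mp hH.eigenvectorUnitary.2
  have hprod : ∀ f g : Fin d → ℂ,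
      (V * diagonal f * Vᴴ) * (V * diagonal g * Vᴴ)
        = V * diagonal (fun i => f i * g i) * Vᴴ := by
    intro f g
    simp only [Matrix.mul_assoc]
    rw [← Matrix.mul_assoc Vᴴ V, hV1, Matrix.one_mul, ← Matrix.mul_assoc (diagonal f),
      Matrix.diagonal_mul_diagonal]
  have hherm : ∀ f : Fin d → ℝ, (V * diagonal (fun i => ((f i : ℝ) : ℂ)) * Vᴴ)ᴴ
      = V * diagonal (fun i => ((f i : ℝ) : ℂ)) * Vᴴ := by
    intro f
    have hstar : star (fun i => ((f i : ℝ) : ℂ)) = fun i => ((f i : ℝ) : ℂ) := by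
      funext i; simp [Complex.conj_ofReal]
    simp only [Matrix.conjTranspose_mul, Matrix.conjTranspose_conjTranspose,
      Matrix.diagonal_conjTranspose, hstar, Matrix.mul_assoc]
  have hspec : S = V * diagonal (fun i => ((σ i : ℝ) : ℂ)) * Vᴴ := by
    have h := hH.spectral_theorem
    rw [Unitary.conjStarAlgAut_apply, Matrix.star_eq_conjTranspose] at h
    exact h
  set χ : Fin d → ℂ := fun i => if σ i = 0 then 0 else 1 with hχdef
  set R : Mat d := V * diagonal (fun i => ((Real.sqrt (σ i) : ℝ) : ℂ)) * Vᴴ with hRdef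
  set Winv : Mat d := V * diagonal (fun i => (((σ i)⁻¹ : ℝ) : ℂ)) * Vᴴ with hWinvdef
  set W : Mat d := A * Winv with hWdef
  have hRR : R * R = S := by
    rw [hRdef, hprod, hspec]
    rw [show (fun i => ((Real.sqrt (σ i) : ℝ) : ℂ) * ((Real.sqrt (σ i) : ℝ) : ℂ))
        = fun i => ((σ i : ℝ) : ℂ) by
      funext i; rw [← Complex.ofReal_mul, Real.mul_self_sqrt (hσ i)]]
  have hMspec : M = V * diagonal (fun i => ((σ i : ℂ) * (σ i : ℂ))) * Vᴴ := by
    rw [← psqrt_mul_self hM, ← hSdef]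
    conv_lhs => rw [hspec]
    rw [hprod]
  have hAP : A * (V * diagonal χ * Vᴴ) = A := by
    have hz : A * (V * diagonal (fun i => 1 - χ i) * Vᴴ) = 0 := by
      rw [← Matrix.conjTranspose_mul_self_eq_zero]
      have hc : (V * diagonal (fun i => 1 - χ i) * Vᴴ)ᴴ
          = V * diagonal (fun i => 1 - χ i) * Vᴴ := by
        rw [show (fun i => 1 - χ i) = fun i => (((if σ i = 0 then 1 else 0 : ℝ)) : ℂ) by
          funext i; by_cases h : σ i = 0 <;> simp [hχdef, h]]
        exact hherm _
      have key : (A * (V * diagonal (fun i => 1 - χ i) * Vᴴ))ᴴ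
            * (A * (V * diagonal (fun i => 1 - χ i) * Vᴴ))
          = (V * diagonal (fun i => 1 - χ i) * Vᴴ) * M
            * (V * diagonal (fun i => 1 - χ i) * Vᴴ) := by
        rw [Matrix.conjTranspose_mul, hc, hMdef]
        simp only [Matrix.mul_assoc]
      rw [key, hMspec, hprod, hprod]
      rw [show (fun i => (1 - χ i) * ((σ i : ℂ) * (σ i : ℂ)) * (1 - χ i)) = fun _ => (0 : ℂ) by
        funext i; by_cases h : σ i = 0 <;> simp [hχdef, h]]
      simp
    have hone : V * diagonal (fun _ => (1 : ℂ)) * Vᴴ = 1 := by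
      rw [Matrix.diagonal_one, Matrix.mul_one, hV2]
    have hdecomp : V * diagonal χ * Vᴴ = 1 - (V * diagonal (fun i => 1 - χ i) * Vᴴ) := by
      rw [← hone]
      rw [show (diagonal χ : Mat d)
          = diagonal (fun _ => (1:ℂ)) - diagonal (fun i => 1 - χ i) by
        rw [Matrix.diagonal_sub]
        rw [show (fun i => (1:ℂ) - (1 - χ i)) = χ by funext i; ring]]
      simp [Matrix.mul_sub, Matrix.sub_mul]
    rw [hdecomp, Matrix.mul_sub, Matrix.mul_one, hz, sub_zero]
  have hWS : W * (R * R) = A := by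
    rw [hRR, hWdef, hspec, hWinvdef, Matrix.mul_assoc, hprod]
    rw [show (fun i => (((σ i)⁻¹ : ℝ) : ℂ) * ((σ i : ℝ) : ℂ)) = χ by
      funext i; by_cases h : σ i = 0
      · simp [hχdef, h]
      · rw [hχdef]
        simp only [if_neg h, ← Complex.ofReal_mul, inv_mul_cancel₀ h, Complex.ofReal_one]]
    exact hAP
  have hWinvH : Winvᴴ = Winv := hherm _
  have hWW : Wᴴ * W = V * diagonal χ * Vᴴ := by
    have h1 : Wᴴ * W = Winv * M * Winv := by
      rw [hWdef, Matrix.conjTranspose_mul, hWinvH, hMdef]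
      simp only [Matrix.mul_assoc]
    rw [h1, hMspec, hWinvdef, hprod, hprod]
    rw [show (fun i => (((σ i)⁻¹ : ℝ) : ℂ) * ((σ i : ℂ) * (σ i : ℂ)) * (((σ i)⁻¹ : ℝ) : ℂ)) = χ by
      funext i; by_cases h : σ i = 0
      · simp [hχdef, h]
      · rw [hχdef]
        simp only [if_neg h, Complex.ofReal_inv]
        have hne : ((σ i : ℝ) : ℂ) ≠ 0 := by exact_mod_cast h
        field_simp]
  refine ⟨R, W, hherm _, hRR, hWS, ?_, ?_⟩
  · rw [hWW]
    have hone : (1 : Mat d) = V * diagonal (fun _ => (1 : ℂ)) * Vᴴ := by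
      rw [Matrix.diagonal_one, Matrix.mul_one, hV2]
    have hsub : (1 : Mat d) - V * diagonal χ * Vᴴ
        = V * diagonal (fun i => (((if σ i = 0 then 1 else 0 : ℝ)) : ℂ)) * Vᴴ := by
      conv_lhs => rw [hone]
      rw [show (diagonal (fun i => (((if σ i = 0 then 1 else 0 : ℝ)) : ℂ)) : Mat d)
          = diagonal (fun _ => (1:ℂ)) - diagonal χ by
        rw [Matrix.diagonal_sub]
        rw [show (fun i => (1:ℂ) - χ i) = fun i => (((if σ i = 0 then 1 else 0 : ℝ)) : ℂ) by
          funext i; by_cases h : σ i = 0 <;> simp [hχdef, h]]]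
      simp [Matrix.mul_sub, Matrix.sub_mul]
    rw [hsub]
    have hd' : 0 ≤ (fun i => (((if σ i = 0 then 1 else 0 : ℝ)) : ℂ)) := by
      intro i
      simp only [Pi.zero_apply]
      by_cases h : σ i = 0 <;> simp [h]
    exact (Matrix.PosSemidef.diagonal hd').mul_mul_conjTranspose_same V
  · rw [hWW, hRR, hspec, hprod]
    rw [show (fun i => χ i * ((σ i : ℝ) : ℂ)) = fun i => ((σ i : ℝ) : ℂ) by
      funext i; by_cases h : σ i = 0 <;> simp [hχdef, h]]

lemma tr_le (A B : Mat d) (hB : (1 - B * Bᴴ).PosSemidef) :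
    ‖Matrix.trace (B * A)‖ ≤ traceNorm A := by
  obtain ⟨R, W, hR, hRR, hWS, hP, hPS⟩ := aux A
  have htn : traceNorm A = (Matrix.trace (R * R)).re := by
    rw [traceNorm_eq, hRR]
  have htnn : 0 ≤ (Matrix.trace (R * R)).re := by
    rw [hRR]; exact psd_trace_re_nonneg (psqrt_psd (Matrix.posSemidef_conjTranspose_mul_self A))
  have htr : Matrix.trace (B * A) = Matrix.trace ((Bᴴ * R)ᴴ * (W * R)) := by
    rw [Matrix.conjTranspose_mul, Matrix.conjTranspose_conjTranspose, hR, ← hWS]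
    rw [show B * (W * (R * R)) = (B * (W * R)) * R by simp only [Matrix.mul_assoc]]
    rw [Matrix.trace_mul_comm]
    simp only [Matrix.mul_assoc]
  have t2 : Matrix.trace ((W * R)ᴴ * (W * R)) = Matrix.trace (R * R) := by
    have e1 : (W * R)ᴴ * (W * R) = R * (Wᴴ * W) * R := by
      rw [Matrix.conjTranspose_mul, hR]; simp only [Matrix.mul_assoc]
    rw [e1, Matrix.trace_mul_cycle, Matrix.trace_mul_comm, hPS]
  have t1 : (Matrix.trace ((Bᴴ * R)ᴴ * (Bᴴ * R))).re ≤ (Matrix.trace (R * R)).re := by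
    have hsplit : R * R - (Bᴴ * R)ᴴ * (Bᴴ * R) = Rᴴ * (1 - B * Bᴴ) * R := by
      rw [Matrix.conjTranspose_mul, Matrix.conjTranspose_conjTranspose, hR]
      rw [Matrix.mul_sub, Matrix.sub_mul, Matrix.mul_one]
      simp only [Matrix.mul_assoc]
    have hpsd := psd_trace_re_nonneg (hB.conjTranspose_mul_mul_same R)
    rw [← hsplit, Matrix.trace_sub, Complex.sub_re] at hpsd
    linarith
  have t1' : 0 ≤ (Matrix.trace ((Bᴴ * R)ᴴ * (Bᴴ * R))).re :=
    psd_trace_re_nonneg (Matrix.posSemidef_conjTranspose_mul_self _)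
  calc ‖Matrix.trace (B * A)‖
      = ‖Matrix.trace ((Bᴴ * R)ᴴ * (W * R))‖ := by rw [htr]
    _ ≤ Real.sqrt ((Matrix.trace ((Bᴴ * R)ᴴ * (Bᴴ * R))).re)
        * Real.sqrt ((Matrix.trace ((W * R)ᴴ * (W * R))).re) := cs _ _
    _ ≤ Real.sqrt ((Matrix.trace (R * R)).re) * Real.sqrt ((Matrix.trace (R * R)).re) := by
        rw [t2]
        exact mul_le_mul_of_nonneg_right (Real.sqrt_le_sqrt t1) (Real.sqrt_nonneg _)
    _ = (Matrix.trace (R * R)).re := Real.mul_self_sqrt htnn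
    _ = traceNorm A := htn.symm

lemma traceNorm_add_le (A B : Mat d) : traceNorm (A + B) ≤ traceNorm A + traceNorm B := by
  obtain ⟨R, W, hR, hRR, hWS, hP, hPS⟩ := aux (A + B)
  have hBW : (1 - Wᴴ * (Wᴴ)ᴴ).PosSemidef := by
    rw [Matrix.conjTranspose_conjTranspose]; exact hP
  have h1 : traceNorm (A + B) = (Matrix.trace (Wᴴ * (A + B))).re := by
    rw [traceNorm_eq]
    rw [← hRR, ← hWS, show Wᴴ * (W * (R * R)) = Wᴴ * W * (R * R) by
      simp only [Matrix.mul_assoc], hPS]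
  have ha := tr_le A Wᴴ hBW
  have hb := tr_le B Wᴴ hBW
  have ha' : (Matrix.trace (Wᴴ * A)).re ≤ traceNorm A :=
    le_trans (Complex.re_le_norm _) ha
  have hb' : (Matrix.trace (Wᴴ * B)).re ≤ traceNorm B :=
    le_trans (Complex.re_le_norm _) hb
  rw [h1, Matrix.mul_add, Matrix.trace_add, Complex.add_re]
  linarith


lemma traceNorm_sub_le₃ {d : ℕ} (A B C D : Mat d) :
    traceNorm (A - D) ≤ traceNorm (A - B) + traceNorm (B - C) + traceNorm (C - D) := by
  have h1 : A - D = ((A - B) + (B - C)) + (C - D) := by abel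
  calc traceNorm (A - D) = traceNorm (((A - B) + (B - C)) + (C - D)) := by rw [← h1]
    _ ≤ traceNorm ((A - B) + (B - C)) + traceNorm (C - D) := traceNorm_add_le _ _
    _ ≤ traceNorm (A - B) + traceNorm (B - C) + traceNorm (C - D) := by
        have := traceNorm_add_le (A - B) (B - C); linarith

end TN

/-- stability of mixing under perturbation of the channel. -/
theorem stmt_11 {d : ℕ} (Φ₁ Φ₂ : Mat d →ₗ[ℂ] Mat d)
    (hc1 : ∀ X : Mat d, traceNorm (Φ₁ X) ≤ traceNorm X)
    (hc2 : ∀ X : Mat d, traceNorm (Φ₂ X) ≤ traceNorm X)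
    (hd1 : ∀ ρ : Mat d, ρ.PosSemidef → Matrix.trace ρ = 1 →
      (Φ₁ ρ).PosSemidef ∧ Matrix.trace (Φ₁ ρ) = 1)
    (hd2 : ∀ ρ : Mat d, ρ.PosSemidef → Matrix.trace ρ = 1 →
      (Φ₂ ρ).PosSemidef ∧ Matrix.trace (Φ₂ ρ) = 1)
    (ρ₁ ρ₂ : Mat d)
    (hρ₁ : ρ₁.PosSemidef) (hρ₁tr : Matrix.trace ρ₁ = 1) (hfix₁ : Φ₁ ρ₁ = ρ₁)
    (hρ₂ : ρ₂.PosSemidef) (hρ₂tr : Matrix.trace ρ₂ = 1) (hfix₂ : Φ₂ ρ₂ = ρ₂)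
    (ε : ℝ) (hε : 0 < ε) (m : ℕ)
    (hmix : ∀ ρ : Mat d, ρ.PosSemidef → Matrix.trace ρ = 1 →
      traceNorm ((⇑Φ₁)^[m] ρ - ρ₁) ≤ ε / 2)
    (hclose : (m : ℝ) * oneNorm (Φ₁ - Φ₂) ≤ ε / 2) :
    ∀ ρ : Mat d, ρ.PosSemidef → Matrix.trace ρ = 1 →
      traceNorm ((⇑Φ₂)^[m] ρ - ρ₂) ≤ 2 * ε := by
  intro ρ hρ hρtr
  set L : Mat d →ₗ[ℂ] Mat d := Φ₁ - Φ₂ with hLdef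
  have bdd : BddAbove (Set.range fun A : {A : Mat d // traceNorm A = 1} =>
      traceNorm (L A.1)) := by
    refine ⟨2, ?_⟩
    rintro x ⟨A, rfl⟩
    have hLA : L A.1 = Φ₁ A.1 + -(Φ₂ A.1) := by
      rw [hLdef, LinearMap.sub_apply, sub_eq_add_neg]
    calc traceNorm (L A.1) = traceNorm (Φ₁ A.1 + -(Φ₂ A.1)) := by rw [hLA]
      _ ≤ traceNorm (Φ₁ A.1) + traceNorm (-(Φ₂ A.1)) := TN.traceNorm_add_le _ _
      _ = traceNorm (Φ₁ A.1) + traceNorm (Φ₂ A.1) := by rw [TN.traceNorm_neg]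
      _ ≤ traceNorm A.1 + traceNorm A.1 := add_le_add (hc1 _) (hc2 _)
      _ = 2 := by rw [A.2]; norm_num
  have hLle : ∀ X : Mat d, X.PosSemidef → Matrix.trace X = 1 →
      traceNorm (L X) ≤ oneNorm L := by
    intro X hX hXtr
    have hX1 : traceNorm X = 1 := by
      rw [TN.traceNorm_psd hX, hXtr, Complex.one_re]
    exact le_ciSup bdd ⟨X, hX1⟩
  have hdens : ∀ (Φ : Mat d →ₗ[ℂ] Mat d),
      (∀ X : Mat d, X.PosSemidef → Matrix.trace X = 1 →
        (Φ X).PosSemidef ∧ Matrix.trace (Φ X) = 1) →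
      ∀ (k : ℕ) (X : Mat d), X.PosSemidef → Matrix.trace X = 1 →
        ((⇑Φ)^[k] X).PosSemidef ∧ Matrix.trace ((⇑Φ)^[k] X) = 1 := by
    intro Φ hΦ k
    induction k with
    | zero => intro X h1 h2; exact ⟨h1, h2⟩
    | succ n ih =>
      intro X h1 h2
      rw [Function.iterate_succ_apply']
      obtain ⟨a, b⟩ := ih X h1 h2
      exact hΦ _ a b
  have tele : ∀ (k : ℕ) (X : Mat d), X.PosSemidef → Matrix.trace X = 1 →
      traceNorm ((⇑Φ₁)^[k] X - (⇑Φ₂)^[k] X) ≤ (k : ℝ) * oneNorm L := by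
    intro k
    induction k with
    | zero =>
      intro X _ _
      simp only [Function.iterate_zero, id_eq, sub_self, TN.traceNorm_zero,
        Nat.cast_zero, zero_mul, le_refl]
    | succ n ih =>
      intro X h1 h2
      rw [Function.iterate_succ_apply', Function.iterate_succ_apply']
      have hY2 := hdens Φ₂ hd2 n X h1 h2
      have step : Φ₁ ((⇑Φ₁)^[n] X) - Φ₂ ((⇑Φ₂)^[n] X)
          = Φ₁ ((⇑Φ₁)^[n] X - (⇑Φ₂)^[n] X) + L ((⇑Φ₂)^[n] X) := by
        rw [hLdef, LinearMap.sub_apply, map_sub]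
        abel
      calc traceNorm (Φ₁ ((⇑Φ₁)^[n] X) - Φ₂ ((⇑Φ₂)^[n] X))
          = traceNorm (Φ₁ ((⇑Φ₁)^[n] X - (⇑Φ₂)^[n] X) + L ((⇑Φ₂)^[n] X)) := by rw [step]
        _ ≤ traceNorm (Φ₁ ((⇑Φ₁)^[n] X - (⇑Φ₂)^[n] X)) + traceNorm (L ((⇑Φ₂)^[n] X)) :=
            TN.traceNorm_add_le _ _
        _ ≤ traceNorm ((⇑Φ₁)^[n] X - (⇑Φ₂)^[n] X) + oneNorm L :=
            add_le_add (hc1 _) (hLle _ hY2.1 hY2.2)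
        _ ≤ (n : ℝ) * oneNorm L + oneNorm L := add_le_add (ih X h1 h2) le_rfl
        _ = ((n + 1 : ℕ) : ℝ) * oneNorm L := by push_cast; ring
  have h1 : traceNorm ((⇑Φ₂)^[m] ρ - (⇑Φ₁)^[m] ρ) ≤ ε / 2 := by
    rw [TN.traceNorm_sub_comm]
    exact le_trans (tele m ρ hρ hρtr) hclose
  have h2 : traceNorm ((⇑Φ₁)^[m] ρ - ρ₁) ≤ ε / 2 := hmix ρ hρ hρtr
  have h3 : traceNorm (ρ₁ - (⇑Φ₁)^[m] ρ₂) ≤ ε / 2 := by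
    rw [TN.traceNorm_sub_comm]
    exact hmix ρ₂ hρ₂ hρ₂tr
  have h4 : traceNorm ((⇑Φ₁)^[m] ρ₂ - ρ₂) ≤ ε / 2 := by
    have ht := tele m ρ₂ hρ₂ hρ₂tr
    rw [Function.iterate_fixed hfix₂ m] at ht
    exact le_trans ht hclose
  have hdec : (⇑Φ₂)^[m] ρ - ρ₂
      = (((⇑Φ₂)^[m] ρ - (⇑Φ₁)^[m] ρ) + ((⇑Φ₁)^[m] ρ - ρ₁))
        + ((ρ₁ - (⇑Φ₁)^[m] ρ₂) + ((⇑Φ₁)^[m] ρ₂ - ρ₂)) := by abel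
  calc traceNorm ((⇑Φ₂)^[m] ρ - ρ₂)
      = traceNorm ((((⇑Φ₂)^[m] ρ - (⇑Φ₁)^[m] ρ) + ((⇑Φ₁)^[m] ρ - ρ₁))
          + ((ρ₁ - (⇑Φ₁)^[m] ρ₂) + ((⇑Φ₁)^[m] ρ₂ - ρ₂))) := by rw [← hdec]
    _ ≤ traceNorm (((⇑Φ₂)^[m] ρ - (⇑Φ₁)^[m] ρ) + ((⇑Φ₁)^[m] ρ - ρ₁))
        + traceNorm ((ρ₁ - (⇑Φ₁)^[m] ρ₂) + ((⇑Φ₁)^[m] ρ₂ - ρ₂)) := TN.traceNorm_add_le _ _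
    _ ≤ (traceNorm ((⇑Φ₂)^[m] ρ - (⇑Φ₁)^[m] ρ) + traceNorm ((⇑Φ₁)^[m] ρ - ρ₁))
        + (traceNorm (ρ₁ - (⇑Φ₁)^[m] ρ₂) + traceNorm ((⇑Φ₁)^[m] ρ₂ - ρ₂)) := by
        have t1 := TN.traceNorm_add_le ((⇑Φ₂)^[m] ρ - (⇑Φ₁)^[m] ρ) ((⇑Φ₁)^[m] ρ - ρ₁)
        have t2 := TN.traceNorm_add_le (ρ₁ - (⇑Φ₁)^[m] ρ₂) ((⇑Φ₁)^[m] ρ₂ - ρ₂)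
        linarith
    _ ≤ 2 * ε := by linarith


end
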